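/- Let A, B, C, D ∈ ℝ² be four pairwise distinct points with A, B, C not collinear, and let k_A, k_B, k_C, k_D be nonzero real numbers. If (X_P, Y_P) and (X_Q, Y_Q) are real solutions of System (*) with Y_P = Y_Q, then X_P = X_Q. In other words, every real solution (X_P, Y_P) of System (*) is uniquely determined by Y_P. -/

import Mathlib

/-- The squared Euclidean "norm" on `ℝ²`: sum of squares of the coordinates. -/
def sq2 (u : ℝ × ℝ) : ℝ := u.1 ^ 2 + u.2 ^ 2

/-- `(X, Y) ∈ ℝ² × ℝ²` is a real solution of System (*) for the configuration
`A, B, C, D` with constants `kA, kB, kC, kD`. -/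
def IsRealSol (A B C D : ℝ × ℝ) (kA kB kC kD : ℝ) (X Y : ℝ × ℝ) : Prop :=
  (X ≠ A ∧ X ≠ B ∧ X ≠ C ∧ X ≠ D) ∧
  (Y ≠ A ∧ Y ≠ B ∧ Y ≠ C ∧ Y ≠ D) ∧
  1 / sq2 (X - A) + 1 / sq2 (Y - A) = kA ∧
  1 / sq2 (X - B) + 1 / sq2 (Y - B) = kB ∧
  1 / sq2 (X - C) + 1 / sq2 (Y - C) = kC ∧
  1 / sq2 (X - D) + 1 / sq2 (Y - D) = kD

lemma sq2_ne_zero {u : ℝ × ℝ} (h : u ≠ 0) : sq2 u ≠ 0 := by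
  intro h0
  apply h
  simp only [sq2] at h0
  have h1 : u.1 = 0 := by nlinarith [sq_nonneg u.1, sq_nonneg u.2]
  have h2 : u.2 = 0 := by nlinarith [sq_nonneg u.1, sq_nonneg u.2]
  exact Prod.ext h1 h2

lemma exists_smul_of_det (A B P : ℝ × ℝ) (hAB : A ≠ B)
    (hdet : (B.1 - A.1) * (P.2 - A.2) - (B.2 - A.2) * (P.1 - A.1) = 0) :
    ∃ r : ℝ, P = r • (B - A) +ᵥ A := by
  by_cases h1 : B.1 - A.1 ≠ 0
  · refine ⟨(P.1 - A.1) / (B.1 - A.1), Prod.ext ?_ ?_⟩ <;>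
      simp only [Prod.smul_fst, Prod.smul_snd, Prod.fst_vadd, Prod.snd_vadd,
        Prod.fst_sub, Prod.snd_sub, smul_eq_mul, vadd_eq_add, Prod.fst_add, Prod.snd_add] <;>
      field_simp <;> nlinarith [hdet]
  · push_neg at h1
    have h2 : B.2 - A.2 ≠ 0 := by
      intro h2
      exact hAB (Prod.ext (by linarith) (by linarith)).symm
    have hP1 : P.1 - A.1 = 0 := by
      have h3 : (B.2 - A.2) * (P.1 - A.1) = 0 := by linear_combination (P.2 - A.2) * h1 - hdet
      rcases mul_eq_zero.mp h3 with h | h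
      · exact absurd h h2
      · exact h
    refine ⟨(P.2 - A.2) / (B.2 - A.2), Prod.ext ?_ ?_⟩ <;>
      simp only [Prod.smul_fst, Prod.smul_snd, Prod.fst_vadd, Prod.snd_vadd,
        Prod.fst_sub, Prod.snd_sub, smul_eq_mul, vadd_eq_add, Prod.fst_add, Prod.snd_add] <;>
      field_simp <;> nlinarith [hP1, h1]

lemma collinear_of_det (A B C : ℝ × ℝ) (hAB : A ≠ B)
    (hdet : (B.1 - A.1) * (C.2 - A.2) - (B.2 - A.2) * (C.1 - A.1) = 0) :
    Collinear ℝ ({A, B, C} : Set (ℝ × ℝ)) := by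
  have hA : A ∈ ({A, B, C} : Set (ℝ × ℝ)) := by simp
  rw [collinear_iff_of_mem hA]
  refine ⟨B - A, ?_⟩
  intro p hp
  rcases hp with h | h | h
  · exact ⟨0, by simp [h]⟩
  · exact ⟨1, by simp [h]⟩
  · subst h
    exact exists_smul_of_det A B p hAB hdet

/-- Every real solution `(X, Y)` of System (*) is uniquely determined by `Y`. -/
theorem solution_determined_by_Y
    (A B C D : ℝ × ℝ) (kA kB kC kD : ℝ)
    (hAB : A ≠ B) (hAC : A ≠ C) (hAD : A ≠ D)
    (hBC : B ≠ C) (hBD : B ≠ D) (hCD : C ≠ D)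
    (habc : ¬ Collinear ℝ ({A, B, C} : Set (ℝ × ℝ)))
    (hkA : kA ≠ 0) (hkB : kB ≠ 0) (hkC : kC ≠ 0) (hkD : kD ≠ 0)
    (XP YP XQ YQ : ℝ × ℝ)
    (hP : IsRealSol A B C D kA kB kC kD XP YP)
    (hQ : IsRealSol A B C D kA kB kC kD XQ YQ)
    (hY : YP = YQ) :
    XP = XQ := by
  subst hY
  obtain ⟨⟨hPA, hPB, hPC, hPD⟩, -, hPeA, hPeB, hPeC, hPeD⟩ := hP
  obtain ⟨⟨hQA, hQB, hQC, hQD⟩, -, hQeA, hQeB, hQeC, hQeD⟩ := hQ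
  have key : ∀ T : ℝ × ℝ, XP ≠ T → XQ ≠ T →
      1 / sq2 (XP - T) + 1 / sq2 (YP - T) = 1 / sq2 (XQ - T) + 1 / sq2 (YP - T) →
      sq2 (XP - T) = sq2 (XQ - T) := by
    intro T hpT hqT heq
    have h1 : sq2 (XP - T) ≠ 0 := sq2_ne_zero (sub_ne_zero.mpr hpT)
    have h2 : sq2 (XQ - T) ≠ 0 := sq2_ne_zero (sub_ne_zero.mpr hqT)
    have h3 : 1 / sq2 (XP - T) = 1 / sq2 (XQ - T) := by linarith
    field_simp at h3
    linarith
  have eA : sq2 (XP - A) = sq2 (XQ - A) := key A hPA hQA (by rw [hPeA, hQeA])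
  have eB : sq2 (XP - B) = sq2 (XQ - B) := key B hPB hQB (by rw [hPeB, hQeB])
  have eC : sq2 (XP - C) = sq2 (XQ - C) := key C hPC hQC (by rw [hPeC, hQeC])
  have hdet : (B.1 - A.1) * (C.2 - A.2) - (B.2 - A.2) * (C.1 - A.1) ≠ 0 := by
    intro h
    exact habc (collinear_of_det A B C hAB h)
  simp only [sq2, Prod.fst_sub, Prod.snd_sub] at eA eB eC
  have e1 : (XP.1 - XQ.1) * (B.1 - A.1) + (XP.2 - XQ.2) * (B.2 - A.2) = 0 := by
    linear_combination (eA - eB) / 2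
  have e2 : (XP.1 - XQ.1) * (C.1 - A.1) + (XP.2 - XQ.2) * (C.2 - A.2) = 0 := by
    linear_combination (eA - eC) / 2
  have h1 : XP.1 = XQ.1 := by
    have h : (XP.1 - XQ.1) * ((B.1 - A.1) * (C.2 - A.2) - (B.2 - A.2) * (C.1 - A.1)) = 0 := by
      linear_combination (C.2 - A.2) * e1 - (B.2 - A.2) * e2
    rcases mul_eq_zero.mp h with h | h
    · linarith
    · exact absurd h hdet
  have h2 : XP.2 = XQ.2 := by
    have h : (XP.2 - XQ.2) * ((B.1 - A.1) * (C.2 - A.2) - (B.2 - A.2) * (C.1 - A.1)) = 0 := by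
      linear_combination (B.1 - A.1) * e2 - (C.1 - A.1) * e1
    rcases mul_eq_zero.mp h with h | h
    · linarith
    · exact absurd h hdet
  exact Prod.ext h1 h2
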